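/- Let I be a (full-supported) matroidal ideal of degree d in R = k[x_1,...,x_n], and let x, y be two variables of R such that xy does not divide u for every u in the minimal monomial generating set G(I). If xu ∈ G(I) for some monomial u of degree d−1, then yu ∈ G(I). -/

import Mathlib

open MvPolynomial

namespace PaperDefs

variable {k : Type*} [Field k] {n : ℕ}

/-- The total degree of an exponent vector. -/
def edeg (a : Fin n →₀ ℕ) : ℕ := ∑ i, a i

/-- `I` is a monomial ideal: it is generated by a set of monomials. -/
def IsMonomialIdeal (I : Ideal (MvPolynomial (Fin n) k)) : Prop :=
  ∃ S : Set (Fin n →₀ ℕ),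
    I = Ideal.span ((fun a => (MvPolynomial.monomial a (1 : k))) '' S)

/-- The (exponent vectors of the) unique minimal monomial generating set `G(I)`:
monomials of `I` that are minimal with respect to divisibility. -/
def minGens (I : Ideal (MvPolynomial (Fin n) k)) : Set (Fin n →₀ ℕ) :=
  {a | (MvPolynomial.monomial a (1 : k)) ∈ I ∧
    ∀ b : Fin n →₀ ℕ, b < a → (MvPolynomial.monomial b (1 : k)) ∉ I}

/-- A squarefree exponent vector. -/
def SqFree (a : Fin n →₀ ℕ) : Prop := ∀ i, a i ≤ 1

/-- `I` is a polymatroidal ideal of degree `d`. -/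
def IsPolymatroidal (I : Ideal (MvPolynomial (Fin n) k)) (d : ℕ) : Prop :=
  IsMonomialIdeal I ∧ I ≠ ⊥ ∧
  (∀ a ∈ minGens I, edeg a = d) ∧
  ∀ a ∈ minGens I, ∀ b ∈ minGens I, ∀ i : Fin n, b i < a i →
    ∃ j : Fin n, a j < b j ∧
      (MvPolynomial.monomial (a - Finsupp.single i 1 + Finsupp.single j 1) (1 : k)) ∈ I

/-- `I` is a matroidal ideal of degree `d`: a squarefree polymatroidal ideal. -/
def IsMatroidal (I : Ideal (MvPolynomial (Fin n) k)) (d : ℕ) : Prop :=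
  IsPolymatroidal I d ∧ ∀ a ∈ minGens I, SqFree a

/-- `I` is full-supported: every variable divides some minimal generator. -/
def FullSupported (I : Ideal (MvPolynomial (Fin n) k)) : Prop :=
  ∀ i : Fin n, ∃ a ∈ minGens I, a i ≠ 0

/-- The maximal graded ideal `(x_1, ..., x_n)`. -/
noncomputable def varIdeal (k : Type*) [Field k] (n : ℕ) : Ideal (MvPolynomial (Fin n) k) :=
  Ideal.span (Set.range MvPolynomial.X)

/-- The colon ideal `(I : x_i)`. -/
noncomputable def colonVar (I : Ideal (MvPolynomial (Fin n) k)) (i : Fin n) :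
    Ideal (MvPolynomial (Fin n) k) :=
  I.colon ((Ideal.span {MvPolynomial.X i} : Ideal (MvPolynomial (Fin n) k)) : Set (MvPolynomial (Fin n) k))

/-- The height of an ideal: the infimum of `Order.height` over the primes containing it. -/
noncomputable def ht {R : Type*} [CommRing R] (I : Ideal R) : ℕ∞ :=
  ⨅ (p : PrimeSpectrum R) (_ : I ≤ p.asIdeal), Order.height p

/-- `I` is unmixed: all associated primes of `R/I` have the same height. -/
def IsUnmixed (I : Ideal (MvPolynomial (Fin n) k)) : Prop :=
  ∀ p ∈ associatedPrimes (MvPolynomial (Fin n) k) (MvPolynomial (Fin n) k ⧸ I),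
    ∀ q ∈ associatedPrimes (MvPolynomial (Fin n) k) (MvPolynomial (Fin n) k ⧸ I),
      ht p = ht q

/-- The arithmetical rank of `I`. -/
noncomputable def ara (I : Ideal (MvPolynomial (Fin n) k)) : ℕ :=
  sInf {t : ℕ | ∃ f : Fin t → MvPolynomial (Fin n) k,
    (Ideal.span (Set.range f)).radical = I.radical}

/-- The squarefree Veronese ideal of degree `d`. -/
noncomputable def sqfreeVeronese (k : Type*) [Field k] (n d : ℕ) : Ideal (MvPolynomial (Fin n) k) :=
  Ideal.span ((fun s : Finset (Fin n) => ∏ i ∈ s, MvPolynomial.X i) ''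
    {s : Finset (Fin n) | s.card = d})

/-- The depth of `R/I` : the supremum of lengths of `R/I`-regular sequences consisting of
elements of the maximal graded ideal. -/
noncomputable def quotDepth (I : Ideal (MvPolynomial (Fin n) k)) : ℕ :=
  sSup {r : ℕ | ∃ rs : List (MvPolynomial (Fin n) k), rs.length = r ∧
    (∀ x ∈ rs, x ∈ varIdeal k n) ∧
    RingTheory.Sequence.IsRegular (MvPolynomial (Fin n) k ⧸ I) rs}

/-- `R/I` is Cohen–Macaulay: the depth of `R/I` equals its Krull dimension. -/
def IsCohenMacaulayQuot (I : Ideal (MvPolynomial (Fin n) k)) : Prop :=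
  (quotDepth I : WithBot ℕ∞) = ringKrullDim (MvPolynomial (Fin n) k ⧸ I)

end PaperDefs

namespace PaperAux
open PaperDefs

variable {k : Type*} [Field k] {n : ℕ}

lemma edeg_add (a b : Fin n →₀ ℕ) : edeg (a + b) = edeg a + edeg b := by
  simp [edeg, Finset.sum_add_distrib]

lemma edeg_single (i : Fin n) (m : ℕ) : edeg (Finsupp.single i m) = m := by
  simp [edeg, Finsupp.single_apply]

lemma edeg_eq_zero {a : Fin n →₀ ℕ} (h : edeg a = 0) : a = 0 := by
  ext i
  rw [edeg, Finset.sum_eq_zero_iff] at h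
  simpa using h i (Finset.mem_univ i)

lemma edeg_le_of_le {a b : Fin n →₀ ℕ} (h : a ≤ b) : edeg a ≤ edeg b :=
  Finset.sum_le_sum fun i _ => Finsupp.le_def.mp h i

lemma edeg_lt_of_lt {a b : Fin n →₀ ℕ} (h : a < b) : edeg a < edeg b := by
  obtain ⟨hle, hne⟩ := lt_iff_le_and_ne.mp h
  have hpt := Finsupp.le_def.mp hle
  obtain ⟨i, hi⟩ : ∃ i, a i ≠ b i := by
    by_contra hc; push_neg at hc
    exact hne (Finsupp.ext hc)
  exact Finset.sum_lt_sum (fun i _ => hpt i) ⟨i, Finset.mem_univ i, lt_of_le_of_ne (hpt i) hi⟩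

lemma eq_of_le_of_edeg_eq {a b : Fin n →₀ ℕ} (h : a ≤ b) (he : edeg a = edeg b) : a = b := by
  by_contra hne
  exact absurd he (Nat.ne_of_lt (edeg_lt_of_lt (lt_of_le_of_ne h hne)))

lemma mono_mem {I : Ideal (MvPolynomial (Fin n) k)} {c b : Fin n →₀ ℕ}
    (hcb : c ≤ b) (hc : (monomial c (1:k)) ∈ I) : (monomial b (1:k)) ∈ I := by
  have h : (monomial b (1:k)) = monomial (b - c) (1:k) * monomial c 1 := by
    rw [monomial_mul, tsub_add_cancel_of_le hcb, one_mul]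
  rw [h]
  exact Ideal.mul_mem_left _ _ hc

lemma exists_minGen_le {I : Ideal (MvPolynomial (Fin n) k)} :
    ∀ N (b : Fin n →₀ ℕ), edeg b ≤ N → (monomial b (1:k)) ∈ I →
      ∃ m ∈ minGens I, m ≤ b := by
  intro N
  induction N with
  | zero =>
    intro b hb hmem
    exact ⟨b, ⟨hmem, fun c hc _ => by have := edeg_lt_of_lt hc; omega⟩, le_rfl⟩
  | succ N ih =>
    intro b hb hmem
    by_cases hmin : ∀ c < b, (monomial c (1:k)) ∉ I
    · exact ⟨b, ⟨hmem, hmin⟩, le_rfl⟩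
    · push_neg at hmin
      obtain ⟨c, hcb, hc⟩ := hmin
      have := edeg_lt_of_lt hcb
      obtain ⟨m, hm, hmc⟩ := ih c (by omega) hc
      exact ⟨m, hm, hmc.trans hcb.le⟩

lemma mem_minGens_of_deg {I : Ideal (MvPolynomial (Fin n) k)} {d : ℕ}
    (hdeg : ∀ a ∈ minGens I, edeg a = d)
    {c : Fin n →₀ ℕ} (hc : (monomial c (1:k)) ∈ I) (hcd : edeg c = d) :
    c ∈ minGens I := by
  refine ⟨hc, fun b hb hmem => ?_⟩
  obtain ⟨m, hm, hmb⟩ := exists_minGen_le (edeg b) b le_rfl hmem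
  have h1 := hdeg m hm
  have h2 := edeg_le_of_le hmb
  have h3 := edeg_lt_of_lt hb
  omega

end PaperAux
open PaperDefs PaperAux in
/-- Lemma 1.1, second part. If `I` is a full-supported matroidal ideal of
degree `d`, `x, y` are two variables such that `xy` divides no minimal generator of `I`,
and `x·u ∈ G(I)` for some monomial `u` of degree `d - 1`, then `y·u ∈ G(I)`. -/
theorem statement1 {k : Type*} [Field k] {n d : ℕ}
    (I : Ideal (MvPolynomial (Fin n) k))
    (hI : IsMatroidal I d) (hfull : FullSupported I)
    (p q : Fin n) (hpq : p ≠ q)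
    (hdvd : ∀ a ∈ minGens I, ¬ (Finsupp.single p 1 + Finsupp.single q 1 ≤ a))
    (u : Fin n →₀ ℕ) (hu : edeg u = d - 1)
    (hxu : Finsupp.single p 1 + u ∈ minGens I) :
    Finsupp.single q 1 + u ∈ minGens I := by

  obtain ⟨⟨hmon, hne, hdeg, hexch⟩, hsf⟩ := hI
  have sval : ∀ (x y : Fin n), (Finsupp.single x 1 : Fin n →₀ ℕ) y = if x = y then 1 else 0 :=
    fun x y => Finsupp.single_apply
  have le_pq : ∀ (x y : Fin n), x ≠ y → ∀ c : Fin n →₀ ℕ, 1 ≤ c x → 1 ≤ c y →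
      Finsupp.single x 1 + Finsupp.single y 1 ≤ c := by
    intro x y hxy c hx hy
    rw [Finsupp.le_def]
    intro m
    rw [Finsupp.add_apply, sval, sval]
    rcases eq_or_ne x m with rfl | h1
    · rw [if_pos rfl, if_neg (fun h => hxy h.symm)]
      omega
    · rw [if_neg h1]
      rcases eq_or_ne y m with rfl | h2
      · rw [if_pos rfl]; omega
      · rw [if_neg h2]; omega
  set t : Fin n →₀ ℕ := Finsupp.single q 1 + u with ht
  set a : Fin n →₀ ℕ := Finsupp.single p 1 + u with ha
  have tval : ∀ m, t m = (if q = m then 1 else 0) + u m := by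
    intro m; rw [ht, Finsupp.add_apply, sval]
  have aval : ∀ m, a m = (if p = m then 1 else 0) + u m := by
    intro m; rw [ha, Finsupp.add_apply, sval]
  have hda : edeg a = d := hdeg a hxu
  have hadd : edeg a = 1 + edeg u := by rw [ha, edeg_add, edeg_single]
  have hdt : edeg t = d := by rw [ht, edeg_add, edeg_single]; omega
  have hup : u p = 0 := by
    have h1 := hsf a hxu p
    rw [aval p, if_pos rfl] at h1
    omega
  have huq : u q = 0 := by
    by_contra h
    have hap : 1 ≤ a p := by rw [aval p, if_pos rfl]; omega
    have haq : 1 ≤ a q := by rw [aval q, if_neg hpq]; omega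
    exact hdvd a hxu (le_pq p q hpq a hap haq)
  have htq : t q = 1 := by rw [tval q, if_pos rfl, huq]
  have key : ∀ N, ∀ b ∈ minGens I, 1 ≤ b q → edeg (b - t) ≤ N → t ∈ minGens I := by
    intro N
    induction N with
    | zero =>
      intro b hb hbq hN
      have h0 : b - t = 0 := edeg_eq_zero (Nat.le_zero.mp hN)
      have hbt : b ≤ t := tsub_eq_zero_iff_le.mp h0
      have hEq : b = t := eq_of_le_of_edeg_eq hbt (by rw [hdeg b hb, hdt])
      rwa [← hEq]
    | succ N ih =>
      intro b hb hbq hN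
      by_cases h0 : edeg (b - t) = 0
      · have hbt : b ≤ t := tsub_eq_zero_iff_le.mp (edeg_eq_zero h0)
        have hEq : b = t := eq_of_le_of_edeg_eq hbt (by rw [hdeg b hb, hdt])
        rwa [← hEq]
      · have h0' : (∑ m, (b - t) m) ≠ 0 := h0
        obtain ⟨i, -, hi0⟩ := Finset.exists_ne_zero_of_sum_ne_zero h0'
        rw [Finsupp.tsub_apply] at hi0
        have hti : t i < b i := by omega
        have hsb : ∀ m, b m ≤ 1 := hsf b hb
        have hbi : b i = 1 := by have := hsb i; omega
        have hiq : i ≠ q := by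
          intro h
          rw [h] at hti hbi
          omega
        have hti0 : t i = 0 := by omega
        have hui : u i = 0 := by
          rw [tval i, if_neg (Ne.symm hiq)] at hti0
          omega
        have hip : i ≠ p := by
          rintro rfl
          exact hdvd b hb (le_pq _ _ hpq b (by omega) hbq)
        have hai : a i = 0 := by rw [aval i, if_neg (Ne.symm hip), hui]
        obtain ⟨j, hj, hmem⟩ := hexch b hb a hxu i (by omega)
        have haj : a j ≤ 1 := hsf a hxu j
        have hbj : b j = 0 := by omega
        have haj1 : a j = 1 := by omega
        have hji : j ≠ i := by rintro rfl; omega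
        have haq : a q = 0 := by rw [aval q, if_neg hpq, huq]
        have hjq : j ≠ q := by rintro rfl; omega
        set b' : Fin n →₀ ℕ := b - Finsupp.single i 1 + Finsupp.single j 1 with hb'
        have hb'app : ∀ m, b' m = (b m - (if i = m then 1 else 0)) + (if j = m then 1 else 0) := by
          intro m
          rw [hb', Finsupp.add_apply, Finsupp.tsub_apply, sval, sval]
        have hb'q : b' q = b q := by
          rw [hb'app q, if_neg hiq, if_neg hjq]
          omega
        have hb'j : b' j = 1 := by
          rw [hb'app j, if_neg (Ne.symm hji), if_pos rfl, hbj]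
        have hsi_le : Finsupp.single i 1 ≤ b := by
          rw [Finsupp.le_def]
          intro m
          rw [sval]
          rcases eq_or_ne i m with rfl | h
          · rw [if_pos rfl]; omega
          · rw [if_neg h]; omega
        have hdb' : edeg b' = d := by
          have h2 := edeg_add (b - Finsupp.single i 1) (Finsupp.single i 1)
          rw [tsub_add_cancel_of_le hsi_le, edeg_single, hdeg b hb] at h2
          rw [hb', edeg_add, edeg_single]
          omega
        have hb'mem : b' ∈ minGens I := mem_minGens_of_deg hdeg hmem hdb'
        rcases eq_or_ne j p with rfl | hjp
        · exact absurd (le_pq _ _ hpq b' (by omega) (by omega)) (hdvd b' hb'mem)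
        · have huj : u j = 1 := by
            rw [aval j, if_neg (Ne.symm hjp)] at haj1
            omega
          have htj : t j = 1 := by rw [tval j, if_neg (Ne.symm hjq), huj]
          have hstep : ∀ m, (b' - t) m ≤ (b - t) m := by
            intro m
            rw [Finsupp.tsub_apply, Finsupp.tsub_apply, hb'app m]
            rcases eq_or_ne i m with rfl | h1
            · rw [if_pos rfl, if_neg hji, hbi, hti0]
              omega
            · rw [if_neg h1]
              rcases eq_or_ne j m with rfl | h2
              · rw [if_pos rfl, hbj, htj]
              · rw [if_neg h2]; omega
          have hstrict : (b' - t) i < (b - t) i := by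
            rw [Finsupp.tsub_apply, Finsupp.tsub_apply, hb'app i,
              if_pos (rfl : i = i), if_neg hji, hbi, hti0]
            omega
          have hlt : edeg (b' - t) < edeg (b - t) := by
            show (∑ m, (b' - t) m) < ∑ m, (b - t) m
            exact Finset.sum_lt_sum (fun m _ => hstep m) ⟨i, Finset.mem_univ i, hstrict⟩
          exact ih b' hb'mem (by omega) (by omega)
  obtain ⟨b0, hb0, hb0q⟩ := hfull q
  exact key (edeg (b0 - t)) b0 hb0 (by omega) le_rfl
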